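/- Let |ψ₀⟩ = √p|0⟩ + √(1−p)|1⟩ with p ∈ (0,1), and let |ψ₁⟩ = |0⟩ or |ψ₁⟩ = |1⟩. Set ρ₀ = |ψ₀⟩⟨ψ₀| and ρ₁ = |ψ₁⟩⟨ψ₁|. Then for any ε ∈ (0,1) there exists n_ε such that for all n ≥ n_ε, inf{ Tr(Z[ρ₁^{⊗n}] E) : E Hermitian on (ℂ²)^{⊗n}, 0 ≤ E ≤ I, Tr(Z[ρ₀^{⊗n}] E) ≥ 1−ε } = 0. -/

import Mathlib

open Matrix Complex Set Filter

noncomputable section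

/-- Number of 1s in a bit string. -/
def ones {n : ℕ} (x : Fin n → Fin 2) : ℕ := (Finset.univ.filter fun i => x i = 1).card

/-- The `n`-fold tensor power of a one-qubit operator, as a matrix indexed by bit strings. -/
def mpow (n : ℕ) (ρ : Matrix (Fin 2) (Fin 2) ℂ) :
    Matrix (Fin n → Fin 2) (Fin n → Fin 2) ℂ :=
  Matrix.of fun x y => ∏ i, ρ (x i) (y i)

/-- The parity operator ω = σ_z^{⊗n}: it multiplies a computational basis vector by
(-1)^(number of 1s). -/
def parityOp (n : ℕ) : Matrix (Fin n → Fin 2) (Fin n → Fin 2) ℂ :=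
  Matrix.diagonal fun x => (-1 : ℂ) ^ ones x

/-- The ℤ₂-twirling Z[X] = ½ (X + ωXω). -/
def twirl {n : ℕ} (X : Matrix (Fin n → Fin 2) (Fin n → Fin 2) ℂ) :
    Matrix (Fin n → Fin 2) (Fin n → Fin 2) ℂ :=
  (2 : ℂ)⁻¹ • (X + parityOp n * X * parityOp n)

/-- Rank-one projection |ψ⟩⟨ψ| on one qubit. -/
def projv (ψ : Fin 2 → ℂ) : Matrix (Fin 2) (Fin 2) ℂ := vecMulVec ψ (star ψ)

/-- Rank-one projection |ψ⟩⟨ψ| on n qubits. -/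
def projN {n : ℕ} (ψ : (Fin n → Fin 2) → ℂ) :
    Matrix (Fin n → Fin 2) (Fin n → Fin 2) ℂ := vecMulVec ψ (star ψ)

def ket0 : Fin 2 → ℂ := ![1, 0]

def ket1 : Fin 2 → ℂ := ![0, 1]

/-- The qubit state √p |0⟩ + e^{iφ} √(1-p) |1⟩. -/
def qubit (p φ : ℝ) : Fin 2 → ℂ :=
  ![(Real.sqrt p : ℂ), Complex.exp (Complex.I * φ) * (Real.sqrt (1 - p) : ℂ)]

/-- The qubit state √p |0⟩ + √(1-p) |1⟩. -/
def qubitR (p : ℝ) : Fin 2 → ℂ := ![(Real.sqrt p : ℂ), (Real.sqrt (1 - p) : ℂ)]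

open scoped ComplexOrder

/-- The set of type-II error probabilities Tr(σ₁ E) over POVM elements 0 ≤ E ≤ I
(Loewner order) whose type-I error is at most ε, i.e. Tr(σ₀ E) ≥ 1-ε. -/
def errSet (n : ℕ) (σ0 σ1 : Matrix (Fin n → Fin 2) (Fin n → Fin 2) ℂ) (ε : ℝ) : Set ℝ :=
  { x | ∃ E : Matrix (Fin n → Fin 2) (Fin n → Fin 2) ℂ,
      E.IsHermitian ∧ E.PosSemidef ∧ (1 - E).PosSemidef ∧
      1 - ε ≤ ((σ0 * E).trace).re ∧ x = ((σ1 * E).trace).re }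

lemma twirl_apply {n : ℕ} (X : Matrix (Fin n → Fin 2) (Fin n → Fin 2) ℂ) (x y : Fin n → Fin 2) :
    twirl X x y = (2 : ℂ)⁻¹ * (X x y + (-1 : ℂ) ^ ones x * X x y * (-1 : ℂ) ^ ones y) := by
  simp [twirl, parityOp, Matrix.mul_diagonal, Matrix.diagonal_mul, Matrix.add_apply]

lemma negOneMulSelf (k : ℕ) : ((-1 : ℂ)) ^ k * ((-1 : ℂ)) ^ k = 1 := by
  rw [← pow_add]; exact Even.neg_one_pow ⟨k, rfl⟩

lemma twirl_diag {n : ℕ} (X : Matrix (Fin n → Fin 2) (Fin n → Fin 2) ℂ) (x : Fin n → Fin 2) :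
    twirl X x x = X x x := by
  rw [twirl_apply]
  linear_combination (2 : ℂ)⁻¹ * X x x * negOneMulSelf (ones x)

lemma mpow_proj_apply {n : ℕ} (ψ : Fin 2 → ℂ) (v : Fin 2)
    (hv : ∀ a, ψ a = if a = v then 1 else 0) (x y : Fin n → Fin 2) :
    mpow n (projv ψ) x y = if x = (fun _ => v) ∧ y = (fun _ => v) then 1 else 0 := by
  have hentry : ∀ a b, projv ψ a b = if a = v ∧ b = v then 1 else 0 := by
    intro a b
    simp only [projv, vecMulVec_apply, Pi.star_apply, hv]
    by_cases ha : a = v <;> by_cases hb : b = v <;> simp [ha, hb]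
  simp only [mpow, Matrix.of_apply, hentry]
  rw [Finset.prod_boole]
  have hiff : (∀ i ∈ Finset.univ, x i = v ∧ y i = v) ↔
      ((x = fun _ => v) ∧ y = fun _ => v) := by
    simp [funext_iff, forall_and]
  simp only [hiff]

lemma twirl_proj_apply {n : ℕ} (ψ : Fin 2 → ℂ) (v : Fin 2)
    (hv : ∀ a, ψ a = if a = v then 1 else 0) (x y : Fin n → Fin 2) :
    twirl (mpow n (projv ψ)) x y = if x = (fun _ => v) ∧ y = (fun _ => v) then 1 else 0 := by
  rw [twirl_apply, mpow_proj_apply ψ v hv]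
  by_cases h : (x = fun _ => v) ∧ (y = fun _ => v)
  · obtain ⟨h1, h2⟩ := h
    subst h1; subst h2
    simp only [eq_self_iff_true, and_self, if_true]
    linear_combination (2 : ℂ)⁻¹ * negOneMulSelf (ones fun _ : Fin n => v)
  · simp [h]

lemma trace_projc_mul {n : ℕ} (c : Fin n → Fin 2)
    (S E : Matrix (Fin n → Fin 2) (Fin n → Fin 2) ℂ)
    (hS : ∀ x y, S x y = if x = c ∧ y = c then 1 else 0) :
    (S * E).trace = E c c := by
  simp only [Matrix.trace, Matrix.diag, Matrix.mul_apply, hS, ite_and]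
  simp [Finset.sum_ite_eq, Finset.sum_ite_eq']

lemma psd_diag_re_nonneg {n : ℕ} {E : Matrix (Fin n → Fin 2) (Fin n → Fin 2) ℂ}
    (hE : E.PosSemidef) (c : Fin n → Fin 2) : 0 ≤ (E c c).re := by
  have h := hE.dotProduct_mulVec_nonneg (Pi.single c 1)
  have : star (Pi.single c 1 : (Fin n → Fin 2) → ℂ) ⬝ᵥ E.mulVec (Pi.single c 1) = E c c := by
    simp [dotProduct, Matrix.mulVec, Pi.single_apply, apply_ite, Finset.sum_ite_eq',
      mul_comm]
  rw [this] at h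
  exact (Complex.le_def.mp h).1

lemma projq_diag0 {p : ℝ} (hp : 0 ≤ p) : projv (qubitR p) 0 0 = (p : ℂ) := by
  simp only [projv, vecMulVec_apply, Pi.star_apply, qubitR]
  simp only [Matrix.cons_val_zero]
  rw [Complex.star_def, Complex.conj_ofReal, ← Complex.ofReal_mul, Real.mul_self_sqrt hp]

lemma projq_diag1 {p : ℝ} (hp : p ≤ 1) : projv (qubitR p) 1 1 = ((1 - p : ℝ) : ℂ) := by
  simp only [projv, vecMulVec_apply, Pi.star_apply, qubitR]
  simp only [Matrix.cons_val_one, Matrix.head_cons, Matrix.cons_val_zero]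
  rw [Complex.star_def, Complex.conj_ofReal, ← Complex.ofReal_mul,
    Real.mul_self_sqrt (by linarith)]

lemma sum_mpow_diag {n : ℕ} (ρ : Matrix (Fin 2) (Fin 2) ℂ) :
    ∑ x : Fin n → Fin 2, mpow n ρ x x = (ρ 0 0 + ρ 1 1) ^ n := by
  have := (Fintype.prod_sum (fun (_ : Fin n) (j : Fin 2) => ρ j j)).symm
  simp only [mpow, Matrix.of_apply]
  rw [this, Fin.sum_univ_two, Finset.prod_const, Finset.card_univ, Fintype.card_fin]

lemma mpow_diag_const {n : ℕ} (ρ : Matrix (Fin 2) (Fin 2) ℂ) (v : Fin 2) :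
    mpow n ρ (fun _ => v) (fun _ => v) = ρ v v ^ n := by
  simp [mpow, Finset.prod_const, Finset.card_univ]

lemma trace_mul_diagonal' {n : ℕ} (S : Matrix (Fin n → Fin 2) (Fin n → Fin 2) ℂ)
    (d : (Fin n → Fin 2) → ℂ) :
    (S * Matrix.diagonal d).trace = ∑ x, S x x * d x := by
  simp [Matrix.trace, Matrix.diag, Matrix.mul_diagonal]


/-- For |ψ₀⟩ = √p|0⟩+√(1-p)|1⟩ with p ∈ (0,1) and |ψ₁⟩ ∈ {|0⟩, |1⟩},
for any ε ∈ (0,1) there is n_ε such that for all n ≥ n_ε the minimal type-II error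
probability under ℤ₂-invariant measurements with type-I error at most ε is zero. -/
theorem typeII_error_vanishes_basis_alt (p : ℝ) (hp : p ∈ Set.Ioo (0 : ℝ) 1)
    (ψ1 : Fin 2 → ℂ) (h1 : ψ1 = ket0 ∨ ψ1 = ket1) :
    ∀ ε ∈ Set.Ioo (0 : ℝ) 1, ∃ nε : ℕ, ∀ n : ℕ, nε ≤ n →
      sInf (errSet n (twirl (mpow n (projv (qubitR p)))) (twirl (mpow n (projv ψ1))) ε)
        = 0 := by
  intro ε hε
  obtain ⟨v, q, hq0, hq1, hv, hqv⟩ :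
      ∃ (v : Fin 2) (q : ℝ), 0 < q ∧ q < 1 ∧ (∀ a, ψ1 a = if a = v then 1 else 0) ∧
        projv (qubitR p) v v = (q : ℂ) := by
    rcases h1 with h | h
    · exact ⟨0, p, hp.1, hp.2,
        by subst h; intro a; fin_cases a <;> simp [ket0], projq_diag0 hp.1.le⟩
    · exact ⟨1, 1 - p, by linarith [hp.2], by linarith [hp.1],
        by subst h; intro a; fin_cases a <;> simp [ket1], projq_diag1 hp.2.le⟩
  obtain ⟨N, hN⟩ := exists_pow_lt_of_lt_one hε.1 hq1
  refine ⟨N, fun n hn => ?_⟩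
  set c : Fin n → Fin 2 := fun _ => v with hc
  have hqn : q ^ n ≤ ε := le_trans (pow_le_pow_of_le_one hq0.le hq1.le hn) hN.le
  have hS1 : ∀ x y, twirl (mpow n (projv ψ1)) x y = if x = c ∧ y = c then 1 else 0 :=
    twirl_proj_apply ψ1 v hv
  have hlb : ∀ x ∈ errSet n (twirl (mpow n (projv (qubitR p))))
      (twirl (mpow n (projv ψ1))) ε, (0 : ℝ) ≤ x := by
    rintro x ⟨E, hH, hPSD, h1E, htr0, rfl⟩
    rw [trace_projc_mul c _ E hS1]
    exact psd_diag_re_nonneg hPSD c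
  have hmem : (0 : ℝ) ∈ errSet n (twirl (mpow n (projv (qubitR p))))
      (twirl (mpow n (projv ψ1))) ε := by
    refine ⟨Matrix.diagonal (fun x => if x = c then 0 else 1), ?_, ?_, ?_, ?_, ?_⟩
    · apply Matrix.isHermitian_diagonal_of_self_adjoint
      funext x; by_cases h : x = c <;> simp [h]
    · exact Matrix.posSemidef_diagonal_iff.mpr fun x => by
        by_cases h : x = c <;> simp [h]
    · rw [← Matrix.diagonal_one, Matrix.diagonal_sub]
      exact Matrix.posSemidef_diagonal_iff.mpr fun x => by
        by_cases h : x = c <;> simp [h]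
    · have htr : (twirl (mpow n (projv (qubitR p))) *
          Matrix.diagonal (fun x => if x = c then 0 else 1)).trace = 1 - (q : ℂ) ^ n := by
        rw [trace_mul_diagonal']
        have hterm : ∀ x, twirl (mpow n (projv (qubitR p))) x x * (if x = c then 0 else 1) =
            mpow n (projv (qubitR p)) x x -
              (if x = c then mpow n (projv (qubitR p)) x x else 0) := by
          intro x; rw [twirl_diag]; by_cases h : x = c <;> simp [h]
        rw [Finset.sum_congr rfl fun x _ => hterm x, Finset.sum_sub_distrib,
          Finset.sum_ite_eq' Finset.univ c _, if_pos (Finset.mem_univ c),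
          sum_mpow_diag, hc, mpow_diag_const,
          projq_diag0 hp.1.le, projq_diag1 hp.2.le, hqv]
        have hsum : ((p : ℝ) : ℂ) + ((1 - p : ℝ) : ℂ) = 1 := by push_cast; ring
        rw [hsum, one_pow]
      rw [htr]
      have : ((1 : ℂ) - (q : ℂ) ^ n).re = 1 - q ^ n := by
        rw [← Complex.ofReal_pow, ← Complex.ofReal_one, ← Complex.ofReal_sub,
          Complex.ofReal_re]
      rw [this]
      linarith
    · rw [trace_projc_mul c _ _ hS1]
      simp [Matrix.diagonal_apply_eq]
  exact le_antisymm (csInf_le ⟨0, hlb⟩ hmem) (le_csInf ⟨0, hmem⟩ hlb)
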